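/- Let q ≥ 2 and n ≥ 1 be integers and let C be a non-empty finite index set. For each M ∈ C let A_M ⊆ [n] be non-empty, a_M ∈ A_M, T_M an orthogonal array of size q^{|A_M|−1} on A_M, X_M = {x ∈ [q]^n : x_{A_M} ∈ T_M}, L_M a collection of subsets S ⊆ [n] with a_M ∉ S, and β_S(M) ∈ ℝ for S ∈ L_M. Let Γ̂ be the real matrix with rows indexed by {(x,M) : M ∈ C, x ∈ X_M} and columns indexed by [q]^n, with entries Γ̂[(x,M), y] = sqrt(q)·Σ_{S∈L_M} β_S(M)·E_S[x,y]. Then Γ̂ᵀΓ̂ = Σ_{M∈C} Σ_{S∈L_M} β_S(M)²·E_S, and consequently ‖Γ̂‖ = max_{S⊆[n]} sqrt(Σ_{M∈C : S∈L_M} β_S(M)²). -/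

import Mathlib

open Matrix
open scoped RealInnerProductSpace

/-- The projector matrices `E_S` on `[q]^n`:
`E_S[x,y] = Π_{j∈S} ([x_j = y_j] − 1/q) · Π_{j∉S} (1/q)`. -/
noncomputable def ES (q n : ℕ) (S : Finset (Fin n)) :
    Matrix (Fin n → Fin q) (Fin n → Fin q) ℝ :=
  Matrix.of fun x y => ∏ j : Fin n,
    if j ∈ S then ((if x j = y j then 1 else 0) - 1 / q) else (1 / q : ℝ)

/-- `T` is an orthogonal array of size `q^(|A|-1)` on the index set `A`:
for every coordinate `i ∈ A` and every assignment of values to the other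
coordinates, exactly one value of coordinate `i` yields an element of `T`. -/
def IsOA {n : ℕ} (q : ℕ) (A : Finset (Fin n)) (T : Finset ({i // i ∈ A} → Fin q)) : Prop :=
  ∀ (i : {i // i ∈ A}) (z : {i // i ∈ A} → Fin q), ∃! v : Fin q, Function.update z i v ∈ T

/-- The spectral (`ℓ₂ → ℓ₂` operator) norm of a matrix. -/
noncomputable def specNorm {𝕜 : Type*} [RCLike 𝕜] {m l : Type*} [Fintype m] [Fintype l]
    [DecidableEq l] (A : Matrix m l 𝕜) : ℝ :=
  ‖LinearMap.toContinuousLinearMap (Matrix.toEuclideanLin A)‖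

section ESLemmas

lemma ES_h1 (q : ℕ) (hq : 0 < q) (u w : Fin q) :
    ∑ v : Fin q, ((if u = v then (1:ℝ) else 0) - 1/q) * ((if v = w then 1 else 0) - 1/q)
      = (if u = w then 1 else 0) - 1/q := by
  have hq0 : (q:ℝ) ≠ 0 := by positivity
  simp only [sub_mul, mul_sub, Finset.sum_sub_distrib, ite_mul, mul_ite, one_mul, mul_one,
    zero_mul, mul_zero, Finset.sum_ite_eq, Finset.sum_ite_eq', Finset.mem_univ, if_true,
    Finset.sum_const, Finset.card_univ, Fintype.card_fin, nsmul_eq_mul]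
  field_simp
  ring

lemma ES_h2 (q : ℕ) (hq : 0 < q) (u : Fin q) :
    ∑ v : Fin q, ((if u = v then (1:ℝ) else 0) - 1/q) * (1/q) = 0 := by
  have hq0 : (q:ℝ) ≠ 0 := by positivity
  simp only [sub_mul, Finset.sum_sub_distrib, ite_mul, one_mul, zero_mul,
    Finset.sum_ite_eq, Finset.mem_univ, if_true,
    Finset.sum_const, Finset.card_univ, Fintype.card_fin, nsmul_eq_mul]
  field_simp
  ring

lemma ES_h2' (q : ℕ) (hq : 0 < q) (w : Fin q) :
    ∑ v : Fin q, (1/q : ℝ) * ((if v = w then 1 else 0) - 1/q) = 0 := by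
  have hq0 : (q:ℝ) ≠ 0 := by positivity
  simp only [mul_sub, Finset.sum_sub_distrib, mul_ite, mul_one, mul_zero,
    Finset.sum_ite_eq', Finset.mem_univ, if_true,
    Finset.sum_const, Finset.card_univ, Fintype.card_fin, nsmul_eq_mul]
  field_simp
  ring

lemma ES_h3 (q : ℕ) (hq : 0 < q) :
    ∑ _v : Fin q, (1/q : ℝ) * (1/q) = 1/q := by
  have hq0 : (q:ℝ) ≠ 0 := by positivity
  simp only [Finset.sum_const, Finset.card_univ, Fintype.card_fin, nsmul_eq_mul]
  field_simp

lemma ES_symm_apply (q n : ℕ) (S : Finset (Fin n)) (x y : Fin n → Fin q) :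
    ES q n S x y = ES q n S y x := by
  simp only [ES, Matrix.of_apply]
  refine Finset.prod_congr rfl fun j _ => ?_
  simp [eq_comm]

lemma ES_transpose (q n : ℕ) (S : Finset (Fin n)) : (ES q n S)ᵀ = ES q n S := by
  ext x y
  exact ES_symm_apply q n S y x

lemma ES_mul (q n : ℕ) (hq : 0 < q) (S S' : Finset (Fin n)) :
    ES q n S * ES q n S' = if S = S' then ES q n S else 0 := by
  ext x y
  simp only [Matrix.mul_apply, ES, Matrix.of_apply]
  rw [show (Finset.univ : Finset (Fin n → Fin q)) = Fintype.piFinset (fun _ => Finset.univ) by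
    simp]
  simp_rw [← Finset.prod_mul_distrib]
  rw [Finset.sum_prod_piFinset Finset.univ
    (fun j v => ((if j ∈ S then (if x j = v then (1:ℝ) else 0) - 1/q else 1/q)) *
      ((if j ∈ S' then (if v = y j then (1:ℝ) else 0) - 1/q else 1/q)))]
  by_cases hSS : S = S'
  · subst hSS
    rw [if_pos rfl, Matrix.of_apply]
    refine Finset.prod_congr rfl fun j _ => ?_
    by_cases hj : j ∈ S
    · simp only [hj, if_true]; exact ES_h1 q hq _ _
    · simp only [hj, if_false]; exact ES_h3 q hq
  · rw [if_neg hSS, Matrix.zero_apply]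
    obtain ⟨j, hj⟩ : ∃ j, (j ∈ S ∧ j ∉ S') ∨ (j ∉ S ∧ j ∈ S') := by
      by_contra hc
      push_neg at hc
      exact hSS (Finset.ext fun j => by have := hc j; tauto)
    refine Finset.prod_eq_zero (Finset.mem_univ j) ?_
    rcases hj with ⟨h₁, h₂⟩ | ⟨h₁, h₂⟩
    · simp only [h₁, h₂, if_true, if_false]; exact ES_h2 q hq _
    · simp only [h₁, h₂, if_true, if_false]; exact ES_h2' q hq _

lemma ES_sum (q n : ℕ) : ∑ S : Finset (Fin n), ES q n S = 1 := by
  ext x y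
  simp only [Matrix.sum_apply, ES, Matrix.of_apply, Matrix.one_apply]
  have : ∀ S : Finset (Fin n),
      (∏ j : Fin n, if j ∈ S then ((if x j = y j then (1:ℝ) else 0) - 1 / q) else (1 / q : ℝ))
      = (∏ j ∈ S, ((if x j = y j then (1:ℝ) else 0) - 1 / q)) *
        ∏ j ∈ Finset.univ \ S, (1 / q : ℝ) := by
    intro S
    rw [Finset.prod_ite]
    congr 1
    · congr 1; ext j; simp
    · congr 1; ext j; simp
  simp_rw [this]
  rw [← Finset.powerset_univ, ← Finset.prod_add]
  have : ∀ j : Fin n, ((if x j = y j then (1:ℝ) else 0) - 1/q) + 1/q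
      = if x j = y j then 1 else 0 := fun j => by ring
  simp_rw [this]
  by_cases hxy : x = y
  · subst hxy; simp
  · rw [if_neg hxy]
    obtain ⟨j, hj⟩ : ∃ j, x j ≠ y j := Function.ne_iff.mp hxy
    exact Finset.prod_eq_zero (Finset.mem_univ j) (by simp [hj])

lemma ES_diag_pos (q n : ℕ) (hq : 2 ≤ q) (S : Finset (Fin n)) (x : Fin n → Fin q) :
    0 < ES q n S x x := by
  have hq2 : (2:ℝ) ≤ q := by exact_mod_cast hq
  have hq1 : (1:ℝ) < q := by linarith
  simp only [ES, Matrix.of_apply]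
  refine Finset.prod_pos fun j _ => ?_
  by_cases hj : j ∈ S
  · simp only [hj, if_true, if_pos rfl]
    have : 1/(q:ℝ) < 1 := by rw [div_lt_one (by linarith)]; exact hq1
    linarith
  · simp only [hj, if_false]; positivity

lemma ES_update (q n : ℕ) (S : Finset (Fin n)) (a : Fin n) (haS : a ∉ S)
    (x y : Fin n → Fin q) (v : Fin q) :
    ES q n S (Function.update x a v) y = ES q n S x y := by
  simp only [ES, Matrix.of_apply]
  refine Finset.prod_congr rfl fun j _ => ?_
  by_cases hj : j = a
  · subst hj; simp [haS]
  · rw [Function.update_apply, if_neg hj]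

end ESLemmas

section NormLemmas

variable {κ m : Type*} [Fintype κ] [DecidableEq κ] [Fintype m]

lemma inner_toEuclideanLin (Γ : Matrix m κ ℝ) (v : EuclideanSpace ℝ κ) :
    ⟪Matrix.toEuclideanLin Γ v, Matrix.toEuclideanLin Γ v⟫
      = ∑ y, ∑ z, (Γᵀ * Γ) y z * ((WithLp.equiv 2 _) v y * (WithLp.equiv 2 _) v z) := by
  set w := (WithLp.equiv 2 _) v with hw
  simp only [PiLp.inner_apply, RCLike.inner_apply, starRingEnd_apply, star_trivial]
  have : ∀ x : m, (Matrix.toEuclideanLin Γ v) x = ∑ y, Γ x y * w y := by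
    intro x
    rfl
  simp_rw [this, Finset.sum_mul_sum, Matrix.mul_apply, Matrix.transpose_apply,
    Finset.sum_mul]
  rw [Finset.sum_comm]
  refine Finset.sum_congr rfl fun y _ => ?_
  rw [Finset.sum_comm]
  refine Finset.sum_congr rfl fun z _ => ?_
  exact Finset.sum_congr rfl fun i _ => by ring

lemma quad_sq (E : Matrix κ κ ℝ) (hsymm : Eᵀ = E) (hidem : E * E = E) (w : κ → ℝ) :
    ∑ y, ∑ z, E y z * (w y * w z) = ∑ x, (∑ y, E x y * w y) ^ 2 := by
  have hsym' : ∀ y z, E y z = E z y := fun y z => congrFun (congrFun hsymm.symm y) z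
  have hs : ∀ y z, E y z = ∑ x, E x y * E x z := by
    intro y z
    conv_lhs => rw [← hidem]
    rw [Matrix.mul_apply]
    exact Finset.sum_congr rfl fun x _ => by rw [hsym' y x]
  calc ∑ y, ∑ z, E y z * (w y * w z)
      = ∑ y, ∑ z, (∑ x, E x y * E x z) * (w y * w z) :=
        Finset.sum_congr rfl fun y _ => Finset.sum_congr rfl fun z _ => by rw [← hs]
    _ = ∑ y, ∑ z, ∑ x, (E x y * w y) * (E x z * w z) :=
        Finset.sum_congr rfl fun y _ => Finset.sum_congr rfl fun z _ => by
          rw [Finset.sum_mul]; exact Finset.sum_congr rfl fun x _ => by ring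
    _ = ∑ y, ∑ x, ∑ z, (E x y * w y) * (E x z * w z) :=
        Finset.sum_congr rfl fun y _ => Finset.sum_comm
    _ = ∑ x, ∑ y, ∑ z, (E x y * w y) * (E x z * w z) := Finset.sum_comm
    _ = ∑ x, (∑ y, E x y * w y) ^ 2 := Finset.sum_congr rfl fun x _ => by
          rw [sq, Finset.sum_mul_sum]

lemma specNorm_of_proj {ι : Type*} [Fintype ι] [DecidableEq ι] [Nonempty ι]
    (E : ι → Matrix κ κ ℝ) (hsymm : ∀ i, (E i)ᵀ = E i)
    (hmul : ∀ i j, E i * E j = if i = j then E i else 0)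
    (hone : ∑ i, E i = 1)
    (hdiag : ∀ i, ∃ x, 0 < E i x x)
    (c : ι → ℝ) (hc : ∀ i, 0 ≤ c i)
    (Γ : Matrix m κ ℝ) (hΓ : Γᵀ * Γ = ∑ i, c i • E i) :
    specNorm Γ = Finset.univ.sup' Finset.univ_nonempty (fun i => Real.sqrt (c i)) := by
  classical
  set L := LinearMap.toContinuousLinearMap (Matrix.toEuclideanLin Γ) with hLdef
  set mx := Finset.univ.sup' Finset.univ_nonempty (fun i => Real.sqrt (c i)) with hmx
  have hmx0 : 0 ≤ mx := le_trans (Real.sqrt_nonneg (c (Classical.arbitrary ι)))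
    (Finset.le_sup' (fun i => Real.sqrt (c i)) (Finset.mem_univ (Classical.arbitrary ι)))
  have swap3 : ∀ (f : ι → κ → κ → ℝ), ∑ y, ∑ z, ∑ i, f i y z = ∑ i, ∑ y, ∑ z, f i y z :=
    fun f => (Finset.sum_congr rfl fun y _ => Finset.sum_comm).trans Finset.sum_comm
  set Q : ι → (κ → ℝ) → ℝ := fun i w => ∑ y, ∑ z, E i y z * (w y * w z) with hQ
  have hQnn : ∀ i w, 0 ≤ Q i w := by
    intro i w
    rw [hQ]
    simp only
    rw [quad_sq (E i) (hsymm i) (by simpa using hmul i i) w]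
    exact Finset.sum_nonneg fun x _ => sq_nonneg _
  have hQsum : ∀ w : κ → ℝ, ∑ i, Q i w = ∑ y, (w y) ^ 2 := by
    intro w
    rw [hQ]
    simp only
    rw [Finset.sum_comm]
    refine Finset.sum_congr rfl fun y _ => ?_
    rw [Finset.sum_comm]
    have : ∀ z, ∑ i, E i y z * (w y * w z) = (1 : Matrix κ κ ℝ) y z * (w y * w z) := by
      intro z
      rw [← Finset.sum_mul, ← Matrix.sum_apply, hone]
    simp_rw [this]
    simp [Matrix.one_apply, sq]
  have hkey : ∀ v : EuclideanSpace ℝ κ, ⟪L v, L v⟫ = ∑ i, c i * Q i ((WithLp.equiv 2 _) v) := by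
    intro v
    have : L v = Matrix.toEuclideanLin Γ v := rfl
    rw [this, inner_toEuclideanLin Γ v, hΓ]
    simp_rw [Matrix.sum_apply, Matrix.smul_apply, smul_eq_mul, Finset.sum_mul]
    rw [swap3]
    refine Finset.sum_congr rfl fun i _ => ?_
    rw [hQ]
    simp only [Finset.mul_sum]
    exact Finset.sum_congr rfl fun y _ => Finset.sum_congr rfl fun z _ => by ring
  have hsymE : ∀ i (y z : κ), E i y z = E i z y :=
    fun i y z => congrFun (congrFun (hsymm i).symm y) z
  have hnorm : ∀ v : EuclideanSpace ℝ κ, ‖v‖ ^ 2 = ∑ y, ((WithLp.equiv 2 _) v y) ^ 2 := by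
    intro v
    rw [← real_inner_self_eq_norm_sq]
    simp only [PiLp.inner_apply, RCLike.inner_apply, starRingEnd_apply, star_trivial, sq]
    rfl
  have hub : specNorm Γ ≤ mx := by
    refine ContinuousLinearMap.opNorm_le_bound _ hmx0 fun v => ?_
    have h2 : ‖L v‖ ^ 2 ≤ (mx * ‖v‖) ^ 2 := by
      rw [← real_inner_self_eq_norm_sq, hkey v]
      have hci : ∀ i, c i ≤ mx ^ 2 := by
        intro i
        have h1 : Real.sqrt (c i) ≤ mx :=
          Finset.le_sup' (fun i => Real.sqrt (c i)) (Finset.mem_univ i)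
        calc c i = Real.sqrt (c i) ^ 2 := (Real.sq_sqrt (hc i)).symm
          _ ≤ mx ^ 2 := pow_le_pow_left₀ (Real.sqrt_nonneg _) h1 2
      calc ∑ i, c i * Q i ((WithLp.equiv 2 _) v)
          ≤ ∑ i, mx ^ 2 * Q i ((WithLp.equiv 2 _) v) :=
            Finset.sum_le_sum fun i _ =>
              mul_le_mul_of_nonneg_right (hci i) (hQnn i _)
        _ = mx ^ 2 * ∑ i, Q i ((WithLp.equiv 2 _) v) := by rw [Finset.mul_sum]
        _ = mx ^ 2 * ‖v‖ ^ 2 := by rw [hQsum, hnorm]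
        _ = (mx * ‖v‖) ^ 2 := by ring
    calc ‖L v‖ = Real.sqrt (‖L v‖ ^ 2) := (Real.sqrt_sq (norm_nonneg _)).symm
      _ ≤ Real.sqrt ((mx * ‖v‖) ^ 2) := Real.sqrt_le_sqrt h2
      _ = mx * ‖v‖ := Real.sqrt_sq (by positivity)
  have hlb : mx ≤ specNorm Γ := by
    refine Finset.sup'_le _ _ fun i _ => ?_
    obtain ⟨x₀, hx₀⟩ := hdiag i
    set w : κ → ℝ := fun y => E i x₀ y with hwdef
    set v : EuclideanSpace ℝ κ := (WithLp.equiv 2 _).symm w with hvdef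
    have hw : (WithLp.equiv 2 _) v = w := rfl
    have hQj : ∀ j, Q j w = if j = i then E i x₀ x₀ else 0 := by
      intro j
      have h1 : Q j w = (E i * (E j * E i)) x₀ x₀ := by
        rw [hQ]
        simp only [Matrix.mul_apply, Finset.mul_sum, Finset.sum_mul]
        refine Finset.sum_congr rfl fun y _ => Finset.sum_congr rfl fun z _ => ?_
        rw [hsymE i z x₀, hwdef]
        ring
      rw [h1, hmul j i]
      by_cases hji : j = i
      · subst hji
        rw [if_pos rfl, if_pos rfl, hmul j j, if_pos rfl]
      · rw [if_neg hji, if_neg hji, Matrix.mul_zero, Matrix.zero_apply]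
    have hvsq : ‖v‖ ^ 2 = E i x₀ x₀ := by
      rw [hnorm, hw]
      calc ∑ y, (w y) ^ 2 = ∑ y, E i x₀ y * E i y x₀ :=
            Finset.sum_congr rfl fun y _ => by rw [hwdef, sq]; simp only; rw [← hsymE i x₀ y]
        _ = (E i * E i) x₀ x₀ := (Matrix.mul_apply).symm
        _ = E i x₀ x₀ := by rw [hmul i i, if_pos rfl]
    have hLv : ‖L v‖ ^ 2 = c i * E i x₀ x₀ := by
      rw [← real_inner_self_eq_norm_sq, hkey, hw]
      simp_rw [hQj, mul_ite, mul_zero]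
      rw [Finset.sum_ite_eq' Finset.univ i (fun j => c j * E i x₀ x₀)]
      simp
    have hvpos : 0 < ‖v‖ := by
      rcases (norm_nonneg v).lt_or_eq with h | h
      · exact h
      · exfalso
        rw [← h] at hvsq
        simp at hvsq
        linarith
    have hLvn : ‖L v‖ = Real.sqrt (c i) * ‖v‖ := by
      have h1 : ‖L v‖ = Real.sqrt (c i * E i x₀ x₀) := by
        rw [← hLv, Real.sqrt_sq (norm_nonneg _)]
      rw [h1, Real.sqrt_mul (hc i), ← hvsq, Real.sqrt_sq (norm_nonneg _)]
    have hle := L.le_opNorm v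
    rw [hLvn] at hle
    exact le_of_mul_le_mul_right hle hvpos
  exact le_antisymm hub hlb

end NormLemmas

section OALemma

lemma res_update {n q : ℕ} (A : Finset (Fin n)) (a : Fin n) (ha : a ∈ A)
    (y : Fin n → Fin q) (v : Fin q) :
    (fun i : {i // i ∈ A} => Function.update y a v i.1)
      = Function.update (fun i : {i // i ∈ A} => y i.1) ⟨a, ha⟩ v := by
  funext i
  by_cases h : i = ⟨a, ha⟩
  · subst h
    simp [Function.update_apply]
  · have h1 : i.1 ≠ a := fun hc => h (Subtype.ext hc)
    rw [Function.update_apply, Function.update_apply, if_neg h1, if_neg h]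

lemma oa_sum {n q : ℕ} (A : Finset (Fin n)) (a : Fin n) (ha : a ∈ A)
    (T : Finset ({i // i ∈ A} → Fin q)) (hT : IsOA q A T)
    (f : (Fin n → Fin q) → ℝ)
    (hf : ∀ x v, f (Function.update x a v) = f x) :
    (q : ℝ) * ∑ x ∈ Finset.univ.filter
        (fun x : Fin n → Fin q => (fun i : {i // i ∈ A} => x i.1) ∈ T), f x
      = ∑ x, f x := by
  classical
  set s := Finset.univ.filter
      (fun x : Fin n → Fin q => (fun i : {i // i ∈ A} => x i.1) ∈ T) with hs
  have key : ∑ p ∈ s ×ˢ (Finset.univ : Finset (Fin q)), f p.1 = ∑ x, f x := by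
    refine Finset.sum_bij (fun p _ => Function.update p.1 a p.2) ?_ ?_ ?_ ?_
    · intro p _; exact Finset.mem_univ _
    · rintro ⟨x, v⟩ hx ⟨x', v'⟩ hx' heq
      have hxT : (fun i : {i // i ∈ A} => x i.1) ∈ T := by
        have := (Finset.mem_product.mp hx).1
        simpa [hs] using this
      have hxT' : (fun i : {i // i ∈ A} => x' i.1) ∈ T := by
        have := (Finset.mem_product.mp hx').1
        simpa [hs] using this
      have hv : v = v' := by
        have := congrFun heq a
        simpa using this
      subst hv
      have hoff : ∀ j, j ≠ a → x j = x' j := by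
        intro j hj
        have := congrFun heq j
        simpa [Function.update_apply, hj] using this
      have hres : (fun i : {i // i ∈ A} => x i.1) =
          Function.update (fun i : {i // i ∈ A} => x i.1) ⟨a, ha⟩ (x a) := by
        funext i
        rw [Function.update_apply]
        by_cases h : i = ⟨a, ha⟩
        · subst h; simp
        · rw [if_neg h]
      have hres' : (fun i : {i // i ∈ A} => x' i.1) =
          Function.update (fun i : {i // i ∈ A} => x i.1) ⟨a, ha⟩ (x' a) := by
        funext i
        rw [Function.update_apply]
        by_cases h : i = ⟨a, ha⟩
        · subst h; simp
        · have h1 : i.1 ≠ a := fun hc => h (Subtype.ext hc)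
          rw [if_neg h]
          exact (hoff i.1 h1).symm
      obtain ⟨v₀, _, huniq⟩ := hT ⟨a, ha⟩ (fun i : {i // i ∈ A} => x i.1)
      have e1 : x a = v₀ := huniq _ (by beta_reduce; rw [← hres]; exact hxT)
      have e2 : x' a = v₀ := huniq _ (by beta_reduce; rw [← hres']; exact hxT')
      have : x = x' := by
        funext j
        by_cases hj : j = a
        · subst hj; rw [e1, e2]
        · exact hoff j hj
      simp [this]
    · intro y _
      obtain ⟨v₀, hv₀, _⟩ := hT ⟨a, ha⟩ (fun i : {i // i ∈ A} => y i.1)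
      refine ⟨(Function.update y a v₀, y a), ?_, ?_⟩
      · simp only [Finset.mem_product, hs, Finset.mem_filter, Finset.mem_univ, true_and,
          and_true]
        rw [res_update A a ha y v₀]
        exact hv₀
      · simp only
        rw [Function.update_idem, Function.update_eq_self]
    · intro p _
      exact (hf p.1 p.2).symm
  rw [← key, Finset.sum_product]
  simp only [Finset.sum_const, Finset.card_univ, Fintype.card_fin, nsmul_eq_mul,
    Finset.mul_sum]

end OALemma

/-- For `Γ̂[(x,M),y] = sqrt(q)·Σ_{S∈L_M} β_S(M)·E_S[x,y]` (with all `S ∈ L_M`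
omitting `a_M ∈ A_M`), one has `Γ̂ᵀΓ̂ = Σ_M Σ_{S∈L_M} β_S(M)²·E_S` and
`‖Γ̂‖ = max_S sqrt(Σ_{M : S∈L_M} β_S(M)²)`. -/
theorem hat_gamma_norm (q n : ℕ) (hq : 2 ≤ q) (hn : 1 ≤ n)
    {C : Type*} [Fintype C] [Nonempty C] [DecidableEq C]
    (A : C → Finset (Fin n)) (hA : ∀ M, (A M).Nonempty)
    (a : C → Fin n) (ha : ∀ M, a M ∈ A M)
    (T : ∀ M, Finset ({i // i ∈ A M} → Fin q))
    (hT : ∀ M, IsOA q (A M) (T M))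
    (XM : C → Finset (Fin n → Fin q))
    (hXM : ∀ M, XM M = Finset.univ.filter fun x : Fin n → Fin q =>
      (fun i : {i // i ∈ A M} => x i.1) ∈ T M)
    (L : C → Finset (Finset (Fin n)))
    (hL : ∀ M, ∀ S ∈ L M, a M ∉ S)
    (β : C → Finset (Fin n) → ℝ)
    (Γ : Matrix {z : C × (Fin n → Fin q) // z.2 ∈ XM z.1} (Fin n → Fin q) ℝ)
    (hΓ : Γ = Matrix.of fun z y =>
      Real.sqrt q * ∑ S ∈ L z.1.1, β z.1.1 S * ES q n S z.1.2 y) :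
    Γᵀ * Γ = ∑ M : C, ∑ S ∈ L M, (β M S) ^ 2 • ES q n S ∧
    specNorm Γ = Finset.univ.sup' ⟨∅, Finset.mem_univ ∅⟩
      (fun S : Finset (Fin n) =>
        Real.sqrt (∑ M ∈ Finset.univ.filter (fun M : C => S ∈ L M), (β M S) ^ 2)) := by
  classical
  have hq0 : 0 < q := by omega
  have hqR : (0:ℝ) ≤ q := by positivity
  -- Part 1
  have part1 : Γᵀ * Γ = ∑ M : C, ∑ S ∈ L M, (β M S) ^ 2 • ES q n S := by
    subst hΓ
    ext y z
    rw [Matrix.mul_apply]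
    have step0 : ∀ w : {z : C × (Fin n → Fin q) // z.2 ∈ XM z.1},
        (Matrix.of fun (z : {z : C × (Fin n → Fin q) // z.2 ∈ XM z.1}) y =>
          Real.sqrt q * ∑ S ∈ L z.1.1, β z.1.1 S * ES q n S z.1.2 y)ᵀ y w *
        (Matrix.of fun (z : {z : C × (Fin n → Fin q) // z.2 ∈ XM z.1}) y =>
          Real.sqrt q * ∑ S ∈ L z.1.1, β z.1.1 S * ES q n S z.1.2 y) w z
        = (fun p : C × (Fin n → Fin q) =>
            (Real.sqrt q * ∑ S ∈ L p.1, β p.1 S * ES q n S p.2 y) *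
            (Real.sqrt q * ∑ S ∈ L p.1, β p.1 S * ES q n S p.2 z)) w.1 := by
      intro w
      rfl
    simp_rw [step0]
    rw [← Finset.sum_subtype
      (Finset.univ.filter fun p : C × (Fin n → Fin q) => p.2 ∈ XM p.1)
      (fun p => by simp)
      (fun p : C × (Fin n → Fin q) =>
        (Real.sqrt q * ∑ S ∈ L p.1, β p.1 S * ES q n S p.2 y) *
        (Real.sqrt q * ∑ S ∈ L p.1, β p.1 S * ES q n S p.2 z))]
    rw [Finset.sum_filter, Fintype.sum_prod_type]
    have inner : ∀ M : C,
        (∑ x : Fin n → Fin q, if x ∈ XM M then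
          (Real.sqrt q * ∑ S ∈ L M, β M S * ES q n S x y) *
          (Real.sqrt q * ∑ S ∈ L M, β M S * ES q n S x z) else 0)
        = ∑ S ∈ L M, (β M S) ^ 2 * ES q n S y z := by
      intro M
      rw [Finset.sum_ite_mem, Finset.univ_inter]
      calc ∑ x ∈ XM M,
            (Real.sqrt q * ∑ S ∈ L M, β M S * ES q n S x y) *
            (Real.sqrt q * ∑ S ∈ L M, β M S * ES q n S x z)
          = ∑ x ∈ XM M, (q:ℝ) *
              ((∑ S ∈ L M, β M S * ES q n S x y) * (∑ S ∈ L M, β M S * ES q n S x z)) :=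
            Finset.sum_congr rfl fun x _ => by
              rw [mul_mul_mul_comm, Real.mul_self_sqrt hqR]
        _ = ∑ x ∈ XM M, ∑ S ∈ L M, ∑ S' ∈ L M,
              (β M S * β M S') * ((q:ℝ) * (ES q n S x y * ES q n S' x z)) := by
            refine Finset.sum_congr rfl fun x _ => ?_
            rw [Finset.sum_mul_sum, Finset.mul_sum]
            refine Finset.sum_congr rfl fun S _ => ?_
            rw [Finset.mul_sum]
            exact Finset.sum_congr rfl fun S' _ => by ring
        _ = ∑ S ∈ L M, ∑ S' ∈ L M,
              (β M S * β M S') * ((q:ℝ) * ∑ x ∈ XM M, ES q n S x y * ES q n S' x z) := by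
            rw [Finset.sum_comm]
            refine Finset.sum_congr rfl fun S _ => ?_
            rw [Finset.sum_comm]
            refine Finset.sum_congr rfl fun S' _ => ?_
            rw [Finset.mul_sum, Finset.mul_sum]
        _ = ∑ S ∈ L M, ∑ S' ∈ L M,
              (β M S * β M S') * (if S = S' then ES q n S y z else 0) := by
            refine Finset.sum_congr rfl fun S hS => Finset.sum_congr rfl fun S' hS' => ?_
            congr 1
            have hoa := oa_sum (A M) (a M) (ha M) (T M) (hT M)
              (fun x => ES q n S x y * ES q n S' x z)
              (fun x v => by
                beta_reduce
                rw [ES_update q n S (a M) (hL M S hS) x y v,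
                  ES_update q n S' (a M) (hL M S' hS') x z v])
            rw [← hXM M] at hoa
            rw [hoa]
            calc ∑ x, ES q n S x y * ES q n S' x z
                = ∑ x, ES q n S y x * ES q n S' x z :=
                  Finset.sum_congr rfl fun x _ => by rw [ES_symm_apply q n S x y]
              _ = (ES q n S * ES q n S') y z := (Matrix.mul_apply).symm
              _ = (if S = S' then ES q n S else 0) y z := by rw [ES_mul q n hq0]
              _ = if S = S' then ES q n S y z else 0 := by
                  by_cases h : S = S' <;> simp [h]
        _ = ∑ S ∈ L M, (β M S) ^ 2 * ES q n S y z := by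
            refine Finset.sum_congr rfl fun S hS => ?_
            simp_rw [mul_ite, mul_zero]
            rw [Finset.sum_ite_eq (L M) S (fun S' => β M S * β M S' * ES q n S y z),
              if_pos hS]
            ring
    simp_rw [inner]
    simp [Matrix.sum_apply, Matrix.smul_apply, smul_eq_mul]
  refine ⟨part1, ?_⟩
  -- Part 2
  have hrw : (∑ M : C, ∑ S ∈ L M, (β M S) ^ 2 • ES q n S)
      = ∑ S : Finset (Fin n),
          (∑ M ∈ Finset.univ.filter (fun M : C => S ∈ L M), (β M S) ^ 2) • ES q n S := by
    have h1 : ∀ M : C, ∑ S ∈ L M, (β M S) ^ 2 • ES q n S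
        = ∑ S : Finset (Fin n), if S ∈ L M then (β M S) ^ 2 • ES q n S else 0 := by
      intro M
      rw [Finset.sum_ite_mem, Finset.univ_inter]
    simp_rw [h1]
    rw [Finset.sum_comm]
    refine Finset.sum_congr rfl fun S _ => ?_
    rw [Finset.sum_smul, Finset.sum_filter]
  have hone : ∑ S : Finset (Fin n), ES q n S = 1 := ES_sum q n
  have := specNorm_of_proj (m := {z : C × (Fin n → Fin q) // z.2 ∈ XM z.1})
    (ES q n) (ES_transpose q n) (ES_mul q n hq0) hone
    (fun S => ⟨fun _ => ⟨0, hq0⟩, ES_diag_pos q n hq S _⟩)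
    (fun S => ∑ M ∈ Finset.univ.filter (fun M : C => S ∈ L M), (β M S) ^ 2)
    (fun S => Finset.sum_nonneg fun M _ => sq_nonneg _)
    Γ (by rw [part1, hrw])
  exact this
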